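/- There exists an absolute constant C > 0 with the following property. For all reals Q ≥ 2 and D with 1 ≤ D ≤ Q^{1/2}: Σ_{Q ≤ q < 2Q} σ_D(q)² ≤ C Q log(2D), where the sum is over integers q with Q ≤ q < 2Q and σ_D(q) = #{d : d | q, D ≤ d ≤ 8D}. -/

import Mathlib

/-- `σ_D(q)` is the number of divisors `d` of `q` with `D ≤ d ≤ 8D`. -/
noncomputable def sigmaD (D : ℝ) (q : ℕ) : ℕ :=
  (q.divisors.filter (fun d : ℕ => D ≤ (d : ℝ) ∧ (d : ℝ) ≤ 8 * D)).card

lemma inv_succ_le_log_sub (n : ℕ) (hn : 1 ≤ n) :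
    (1 : ℝ) / (n + 1) ≤ Real.log (n + 1) - Real.log n := by
  have hn0 : (0 : ℝ) < n := by exact_mod_cast hn
  have h := Real.log_le_sub_one_of_pos (x := (n : ℝ) / (n + 1)) (by positivity)
  rw [Real.log_div (by positivity) (by positivity)] at h
  have h2 : (n : ℝ) / (n + 1) - 1 = -(1 / (n + 1)) := by field_simp; ring
  linarith [h2 ▸ h]

lemma harmonic_Ioc_le (m M : ℕ) (hm : 1 ≤ m) (hM : m ≤ M) :
    ∑ a ∈ Finset.Ioc m M, (1 : ℝ) / a ≤ Real.log M - Real.log m := by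
  induction M, hM using Nat.le_induction with
  | base => simp
  | succ n hn ih =>
    rw [Finset.sum_Ioc_succ_top (by omega)]
    have h := inv_succ_le_log_sub n (le_trans hm hn)
    push_cast
    push_cast at ih h
    linarith

lemma harmonic_Icc_le (m M : ℕ) (hm : 1 ≤ m) (hM : m ≤ M) :
    ∑ a ∈ Finset.Icc m M, (1 : ℝ) / a ≤ 1 + Real.log M - Real.log m := by
  rw [Finset.Icc_eq_cons_Ioc hM, Finset.sum_cons]
  have h1 : (1 : ℝ) / m ≤ 1 := by
    rw [div_le_one (by exact_mod_cast hm)]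
    exact_mod_cast hm
  linarith [harmonic_Ioc_le m M hm hM]

/-- There is an absolute constant `C > 0` such that for all reals `Q ≥ 2` and
`1 ≤ D ≤ Q^{1/2}`: `∑_{Q ≤ q < 2Q} σ_D(q)² ≤ C Q log(2D)`. -/
theorem divisor_count_second_moment :
    ∃ C : ℝ, 0 < C ∧
      ∀ Q D : ℝ, 2 ≤ Q → 1 ≤ D → D ≤ Q ^ ((1 : ℝ) / 2) →
        ∑ q ∈ (Finset.Icc 1 ⌊2 * Q⌋₊).filter
            (fun q : ℕ => Q ≤ (q : ℝ) ∧ (q : ℝ) < 2 * Q),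
          (sigmaD D q : ℝ) ^ 2 ≤ C * Q * Real.log (2 * D) := by
  classical
  refine ⟨160, by norm_num, ?_⟩
  intro Q D hQ hD _
  have hD0 : (0 : ℝ) < D := by linarith
  have hQ0 : (0 : ℝ) < Q := by linarith
  set N := ⌊2 * Q⌋₊ with hN
  set M := ⌊8 * D⌋₊ with hM
  have hM1 : 1 ≤ M := Nat.le_floor (by push_cast; linarith)
  have hMle : (M : ℝ) ≤ 8 * D := Nat.floor_le (by positivity)
  set s : ℕ → Finset ℕ :=
    fun q => q.divisors.filter (fun d : ℕ => D ≤ (d : ℝ) ∧ (d : ℝ) ≤ 8 * D) with hs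
  set I' : Finset ℕ := (Finset.Icc 1 M).filter (fun d => D ≤ (d : ℝ)) with hI'
  set T := I' ×ˢ I' with hT
  set A := (Finset.Icc 1 N).filter (fun q : ℕ => Q ≤ (q : ℝ) ∧ (q : ℝ) < 2 * Q) with hA
  have hsub : ∀ q, s q ⊆ I' := by
    intro q d hd
    simp only [hs, hI', Finset.mem_filter, Nat.mem_divisors, Finset.mem_Icc] at hd ⊢
    obtain ⟨⟨hdvd, hq0⟩, hd1, hd2⟩ := hd
    refine ⟨⟨?_, Nat.le_floor hd2⟩, hd1⟩
    have : (1 : ℝ) ≤ (d : ℝ) := le_trans hD hd1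
    exact_mod_cast this
  have hI'mem : ∀ d ∈ I', 1 ≤ d ∧ D ≤ (d : ℝ) ∧ (d : ℝ) ≤ 8 * D := by
    intro d hd
    simp only [hI', Finset.mem_filter, Finset.mem_Icc] at hd
    exact ⟨hd.1.1, hd.2, le_trans (by exact_mod_cast hd.1.2) hMle⟩
  -- Step 1: expand the square as a double count over pairs of divisors
  have step1 : ∑ q ∈ A, (sigmaD D q : ℝ) ^ 2
      = ∑ p ∈ T, ((A.filter (fun q => p ∈ s q ×ˢ s q)).card : ℝ) := by
    have key : ∀ q ∈ A, (sigmaD D q : ℝ) ^ 2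
        = ∑ p ∈ T, if p ∈ s q ×ˢ s q then (1 : ℝ) else 0 := by
      intro q _
      rw [Finset.sum_boole]
      have hfil : T.filter (fun p => p ∈ s q ×ˢ s q) = s q ×ˢ s q := by
        rw [Finset.filter_mem_eq_inter]
        exact Finset.inter_eq_right.mpr (Finset.product_subset_product (hsub q) (hsub q))
      rw [hfil, Finset.card_product]
      have : sigmaD D q = (s q).card := rfl
      rw [this]; push_cast; ring
    rw [Finset.sum_congr rfl key, Finset.sum_comm]
    refine Finset.sum_congr rfl fun p _ => ?_
    rw [Finset.sum_boole]
  -- Step 2: per-pair count bound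
  have hcount : ∀ p ∈ T, ((A.filter (fun q => p ∈ s q ×ˢ s q)).card : ℝ)
      ≤ 2 * Q / (Nat.lcm p.1 p.2 : ℝ) := by
    intro p hp
    simp only [hT, Finset.mem_product] at hp
    have h1 := (hI'mem p.1 hp.1).1
    have h2 := (hI'mem p.2 hp.2).1
    have hL : 0 < Nat.lcm p.1 p.2 := Nat.lcm_pos h1 h2
    have hsubc : A.filter (fun q => p ∈ s q ×ˢ s q)
        ⊆ (Finset.Ioc 0 N).filter (fun q => Nat.lcm p.1 p.2 ∣ q) := by
      intro q hq
      simp only [Finset.mem_filter, Finset.mem_product, hA, Finset.mem_Icc, hs,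
        Nat.mem_divisors, Finset.mem_Ioc] at hq ⊢
      obtain ⟨⟨⟨hq1, hqN⟩, _⟩, ⟨⟨hdvd1, _⟩, _⟩, ⟨hdvd2, _⟩, _⟩ := hq
      exact ⟨⟨by omega, hqN⟩, Nat.lcm_dvd hdvd1 hdvd2⟩
    calc ((A.filter (fun q => p ∈ s q ×ˢ s q)).card : ℝ)
        ≤ (((Finset.Ioc 0 N).filter (fun q => Nat.lcm p.1 p.2 ∣ q)).card : ℝ) := by
          exact_mod_cast Finset.card_le_card hsubc
      _ = ((N / Nat.lcm p.1 p.2 : ℕ) : ℝ) := by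
          rw [Nat.Ioc_filter_dvd_card_eq_div]
      _ ≤ (N : ℝ) / (Nat.lcm p.1 p.2 : ℝ) := Nat.cast_div_le
      _ ≤ 2 * Q / (Nat.lcm p.1 p.2 : ℝ) := by
          gcongr
          exact Nat.floor_le (by positivity)
  -- Step 3: 1/lcm = gcd/(d1*d2)
  have hgcdlcm : ∀ p ∈ T, 2 * Q / (Nat.lcm p.1 p.2 : ℝ)
      = 2 * Q * ((Nat.gcd p.1 p.2 : ℝ) / (p.1 * p.2)) := by
    intro p hp
    simp only [hT, Finset.mem_product] at hp
    have h1 := (hI'mem p.1 hp.1).1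
    have h2 := (hI'mem p.2 hp.2).1
    have hL : 0 < Nat.lcm p.1 p.2 := Nat.lcm_pos h1 h2
    have hg : 0 < Nat.gcd p.1 p.2 := Nat.gcd_pos_of_pos_left _ h1
    have hkey : (Nat.gcd p.1 p.2 : ℝ) * (Nat.lcm p.1 p.2 : ℝ) = (p.1 : ℝ) * p.2 := by
      exact_mod_cast congrArg (Nat.cast : ℕ → ℝ) (Nat.gcd_mul_lcm p.1 p.2)
    have hL0 : (0:ℝ) < (Nat.lcm p.1 p.2 : ℝ) := by exact_mod_cast hL
    have hp10 : (0:ℝ) < (p.1 : ℝ) := by exact_mod_cast h1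
    have hp20 : (0:ℝ) < (p.2 : ℝ) := by exact_mod_cast h2
    have hL0' : (Nat.lcm p.1 p.2 : ℝ) ≠ 0 := hL0.ne'
    have hp10' : (p.1 : ℝ) ≠ 0 := hp10.ne'
    have hp20' : (p.2 : ℝ) ≠ 0 := hp20.ne'
    field_simp
    linear_combination (-1) * hkey
  -- The set of multiples of g among candidate divisors
  set F : ℕ → Finset ℕ := fun g => I'.filter (fun d => g ∣ d) with hF
  set inner : ℕ → ℝ := fun g => ∑ d ∈ F g, (1 : ℝ) / d with hinner
  have hinner_nonneg : ∀ g, 0 ≤ inner g := by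
    intro g; apply Finset.sum_nonneg; intro d _; positivity
  -- Step 4: inner sum bound
  have hinner_le : ∀ g, 1 ≤ g → inner g ≤ 4 / g := by
    intro g hg1
    have hg0 : (0:ℝ) < (g:ℝ) := by exact_mod_cast hg1
    set m := ⌈D / g⌉₊ with hm
    set m' := ⌊8 * D / g⌋₊ with hm'
    have hm1 : 1 ≤ m := Nat.one_le_ceil_iff.mpr (by positivity)
    have hFsub : F g ⊆ (Finset.Icc m m').image (fun a => g * a) := by
      intro d hd
      simp only [hF, Finset.mem_filter] at hd
      obtain ⟨hdI, hdvd⟩ := hd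
      obtain ⟨a, rfl⟩ := hdvd
      obtain ⟨_, hDd, hd8⟩ := hI'mem _ hdI
      refine Finset.mem_image.mpr ⟨a, Finset.mem_Icc.mpr ⟨?_, ?_⟩, rfl⟩
      · rw [hm]
        apply Nat.ceil_le.mpr
        rw [div_le_iff₀ hg0]
        push_cast at hDd ⊢
        linarith [hDd]
      · apply Nat.le_floor
        rw [le_div_iff₀ hg0]
        push_cast at hd8 ⊢
        linarith [hd8]
    have hinj : Set.InjOn (fun a => g * a) ↑(Finset.Icc m m') := by
      intro a _ b _ hab
      exact Nat.eq_of_mul_eq_mul_left (by omega) hab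
    have h1 : inner g ≤ ∑ d ∈ (Finset.Icc m m').image (fun a => g * a), (1:ℝ)/d := by
      apply Finset.sum_le_sum_of_subset_of_nonneg hFsub
      intro d _ _; positivity
    have h2 : ∑ d ∈ (Finset.Icc m m').image (fun a => g * a), (1:ℝ)/d
        = ∑ a ∈ Finset.Icc m m', (1:ℝ)/(g*a) := by
      rw [Finset.sum_image (fun a ha b hb h => hinj ha hb h)]
      push_cast
      rfl
    have h3 : ∑ a ∈ Finset.Icc m m', (1:ℝ)/(g*a) = (1/g) * ∑ a ∈ Finset.Icc m m', (1:ℝ)/a := by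
      rw [Finset.mul_sum]
      refine Finset.sum_congr rfl fun a _ => ?_
      rw [div_mul_div_comm, one_mul]
    have h4 : ∑ a ∈ Finset.Icc m m', (1:ℝ)/a ≤ 4 := by
      rcases le_or_gt m m' with hmm | hmm
      · have hb := harmonic_Icc_le m m' hm1 hmm
        have hm'1 : 1 ≤ m' := le_trans hm1 hmm
        have hmD : D / g ≤ (m:ℝ) := Nat.le_ceil _
        have hm'D : (m':ℝ) ≤ 8 * D / g := Nat.floor_le (by positivity)
        have hlog : Real.log m' ≤ Real.log 8 + Real.log m := by
          rw [← Real.log_mul (by norm_num) (by exact_mod_cast hm1 : (0:ℝ) < (m:ℝ)).ne']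
          apply Real.log_le_log (by exact_mod_cast hm'1)
          calc (m':ℝ) ≤ 8 * D / g := hm'D
            _ ≤ 8 * m := by
                rw [div_le_iff₀ hg0] at *
                nlinarith [hmD, hg0]
        have hlog8 : Real.log 8 ≤ 3 := by
          have h8 : (8:ℝ) = 2 ^ (3:ℕ) := by norm_num
          rw [h8, Real.log_pow]
          have := Real.log_two_lt_d9
          push_cast
          linarith
        linarith
      · rw [Finset.Icc_eq_empty (by omega)]
        norm_num
    calc inner g ≤ (1/g) * ∑ a ∈ Finset.Icc m m', (1:ℝ)/a := by rw [← h3, ← h2]; exact h1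
      _ ≤ (1/g) * 4 := by
          apply mul_le_mul_of_nonneg_left h4 (by positivity)
      _ = 4 / g := by ring
  -- Step 5: fiberwise decomposition over g = gcd
  have hmaps : ∀ p ∈ T, Nat.gcd p.1 p.2 ∈ Finset.Icc 1 M := by
    intro p hp
    simp only [hT, Finset.mem_product] at hp
    have h1 := (hI'mem p.1 hp.1).1
    have hpM : p.1 ≤ M := by
      have := hp.1
      simp only [hI', Finset.mem_filter, Finset.mem_Icc] at this
      exact this.1.2
    exact Finset.mem_Icc.mpr ⟨Nat.gcd_pos_of_pos_left _ h1, le_trans (Nat.gcd_le_left _ h1) hpM⟩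
  have hfib : ∑ p ∈ T, (Nat.gcd p.1 p.2 : ℝ) / (p.1 * p.2)
      = ∑ g ∈ Finset.Icc 1 M, ∑ p ∈ T.filter (fun p => Nat.gcd p.1 p.2 = g),
          (Nat.gcd p.1 p.2 : ℝ) / (p.1 * p.2) :=
    (Finset.sum_fiberwise_of_maps_to hmaps _).symm
  -- Per-fiber bound
  have hfiber_le : ∀ g ∈ Finset.Icc 1 M,
      ∑ p ∈ T.filter (fun p => Nat.gcd p.1 p.2 = g), (Nat.gcd p.1 p.2 : ℝ) / (p.1 * p.2)
        ≤ 16 / g := by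
    intro g hg
    have hg1 : 1 ≤ g := (Finset.mem_Icc.mp hg).1
    have hg0 : (0:ℝ) < (g:ℝ) := by exact_mod_cast hg1
    have e1 : ∑ p ∈ T.filter (fun p => Nat.gcd p.1 p.2 = g), (Nat.gcd p.1 p.2 : ℝ) / (p.1 * p.2)
        = ∑ p ∈ T.filter (fun p => Nat.gcd p.1 p.2 = g), (g : ℝ) / (p.1 * p.2) := by
      refine Finset.sum_congr rfl fun p hp => ?_
      rw [(Finset.mem_filter.mp hp).2]
    have e2 : T.filter (fun p => Nat.gcd p.1 p.2 = g) ⊆ (F g) ×ˢ (F g) := by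
      intro p hp
      obtain ⟨hpT, hpg⟩ := Finset.mem_filter.mp hp
      simp only [hT, Finset.mem_product] at hpT
      refine Finset.mem_product.mpr ⟨?_, ?_⟩ <;>
        simp only [hF, Finset.mem_filter]
      · exact ⟨hpT.1, hpg ▸ Nat.gcd_dvd_left _ _⟩
      · exact ⟨hpT.2, hpg ▸ Nat.gcd_dvd_right _ _⟩
    have e3 : ∑ p ∈ (F g) ×ˢ (F g), (g : ℝ) / (p.1 * p.2) = (g:ℝ) * (inner g)^2 := by
      rw [Finset.sum_product]
      have : ∀ a ∈ F g, ∑ b ∈ F g, (g:ℝ)/(a*b) = (g:ℝ)/a * inner g := by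
        intro a _
        rw [hinner, Finset.mul_sum]
        refine Finset.sum_congr rfl fun b _ => ?_
        rw [div_mul_div_comm, mul_one]
      rw [Finset.sum_congr rfl this, ← Finset.sum_mul]
      have : ∑ a ∈ F g, (g:ℝ)/a = (g:ℝ) * inner g := by
        rw [hinner, Finset.mul_sum]
        exact Finset.sum_congr rfl fun a _ => (mul_one_div _ _).symm
      rw [this]; ring
    calc ∑ p ∈ T.filter (fun p => Nat.gcd p.1 p.2 = g), (Nat.gcd p.1 p.2 : ℝ) / (p.1 * p.2)
        = ∑ p ∈ T.filter (fun p => Nat.gcd p.1 p.2 = g), (g : ℝ) / (p.1 * p.2) := e1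
      _ ≤ ∑ p ∈ (F g) ×ˢ (F g), (g : ℝ) / (p.1 * p.2) := by
          apply Finset.sum_le_sum_of_subset_of_nonneg e2
          intro p _ _
          positivity
      _ = (g:ℝ) * (inner g)^2 := e3
      _ ≤ (g:ℝ) * (4/g)^2 := by
          apply mul_le_mul_of_nonneg_left _ (le_of_lt hg0)
          exact pow_le_pow_left₀ (hinner_nonneg g) (hinner_le g hg1) 2
      _ = 16 / g := by field_simp; ring
  -- Step 6: assemble everything
  have hsum_inv : ∑ g ∈ Finset.Icc 1 M, (16:ℝ) / g ≤ 16 * (1 + Real.log M) := by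
    have h := harmonic_Icc_le 1 M (le_refl 1) hM1
    simp only [Nat.cast_one, Real.log_one, sub_zero] at h
    calc ∑ g ∈ Finset.Icc 1 M, (16:ℝ) / g = 16 * ∑ g ∈ Finset.Icc 1 M, (1:ℝ)/g := by
          rw [Finset.mul_sum]
          exact Finset.sum_congr rfl fun g _ => by rw [mul_one_div]
      _ ≤ 16 * (1 + Real.log M) := by linarith
  have hlogM : Real.log M ≤ Real.log 4 + Real.log (2 * D) := by
    rw [← Real.log_mul (by norm_num) (by linarith)]
    apply Real.log_le_log (by exact_mod_cast hM1)
    calc (M:ℝ) ≤ 8 * D := hMle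
      _ = 4 * (2 * D) := by ring
  have hlog2D : Real.log 2 ≤ Real.log (2 * D) := by
    apply Real.log_le_log (by norm_num)
    linarith
  have hlog2 := Real.log_two_gt_d9
  have hlog4 : Real.log 4 = 2 * Real.log 2 := by
    have : (4:ℝ) = 2 ^ (2:ℕ) := by norm_num
    rw [this, Real.log_pow]; push_cast; ring
  calc ∑ q ∈ A, (sigmaD D q : ℝ) ^ 2
      = ∑ p ∈ T, ((A.filter (fun q => p ∈ s q ×ˢ s q)).card : ℝ) := step1
    _ ≤ ∑ p ∈ T, 2 * Q / (Nat.lcm p.1 p.2 : ℝ) := Finset.sum_le_sum hcount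
    _ = ∑ p ∈ T, 2 * Q * ((Nat.gcd p.1 p.2 : ℝ) / (p.1 * p.2)) :=
        Finset.sum_congr rfl hgcdlcm
    _ = 2 * Q * ∑ p ∈ T, (Nat.gcd p.1 p.2 : ℝ) / (p.1 * p.2) := by
        rw [Finset.mul_sum]
    _ = 2 * Q * ∑ g ∈ Finset.Icc 1 M, ∑ p ∈ T.filter (fun p => Nat.gcd p.1 p.2 = g),
          (Nat.gcd p.1 p.2 : ℝ) / (p.1 * p.2) := by rw [hfib]
    _ ≤ 2 * Q * ∑ g ∈ Finset.Icc 1 M, (16:ℝ) / g := by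
        apply mul_le_mul_of_nonneg_left (Finset.sum_le_sum hfiber_le) (by positivity)
    _ ≤ 2 * Q * (16 * (1 + Real.log M)) := by
        apply mul_le_mul_of_nonneg_left hsum_inv (by positivity)
    _ ≤ 160 * Q * Real.log (2 * D) := by nlinarith [hlogM, hlog2D, hlog2, hlog4, hQ0]
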